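/- Positivity of the speedup integral: for 0 < a < 1, ∫_{[0,2π]²} (cos u₁ - cos u₂)/((1-cos u₁)+(1-cos u₂)+a(cos u₂ - cos u₁)) du₁ du₂ > 0. -/

import Mathlib

open Real MeasureTheory

-- pointwise algebraic key identity
lemma aux_key (a c d : ℝ) (ha : 0 < a) (ha1 : a < 1) (hc1 : c ≤ 1) (hd1 : d ≤ 1) :
    (c - d) / ((1 - c) + (1 - d) + a * (d - c))
      + (d - c) / ((1 - d) + (1 - c) + a * (c - d))
      = 2 * a * (c - d) ^ 2 / (((1 - c) + (1 - d)) ^ 2 - a ^ 2 * (c - d) ^ 2) := by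
  rcases eq_or_lt_of_le (by linarith : (0:ℝ) ≤ (1 - c) + (1 - d)) with hB | hB
  · have hc : c = 1 := by linarith
    have hd : d = 1 := by linarith
    subst hc; subst hd; norm_num
  · have h1 : 0 < (1 - c) + (1 - d) + a * (d - c) := by nlinarith
    have h2 : 0 < (1 - d) + (1 - c) + a * (c - d) := by nlinarith
    have h3 : 0 < ((1 - c) + (1 - d)) ^ 2 - a ^ 2 * (c - d) ^ 2 := by nlinarith
    rw [div_add_div _ _ h1.ne' h2.ne', div_eq_div_iff (mul_pos h1 h2).ne' h3.ne']
    ring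

lemma aux_fbound (a c d : ℝ) (ha : 0 < a) (ha1 : a < 1) (hc1 : c ≤ 1) (hd1 : d ≤ 1) :
    |(c - d) / ((1 - c) + (1 - d) + a * (d - c))| ≤ 1 / (1 - a) := by
  have h1a : 0 < 1 - a := by linarith
  rcases eq_or_lt_of_le (by linarith : (0:ℝ) ≤ (1 - c) + (1 - d)) with hB | hB
  · have hc : c = 1 := by linarith
    have hd : d = 1 := by linarith
    subst hc; subst hd
    simp only [sub_self, zero_div, abs_zero, mul_zero, add_zero, zero_add]
    positivity
  · have h1 : 0 < (1 - c) + (1 - d) + a * (d - c) := by nlinarith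
    rw [abs_div, abs_of_pos h1]
    have hA : |c - d| ≤ (1 - c) + (1 - d) := by
      rw [abs_le]; constructor <;> linarith
    calc |c - d| / ((1 - c) + (1 - d) + a * (d - c))
        ≤ ((1 - c) + (1 - d)) / ((1 - a) * ((1 - c) + (1 - d))) := by
          apply div_le_div₀ (by linarith) hA (by positivity)
          nlinarith [abs_le.mp hA]
      _ = 1 / (1 - a) := by
          rw [div_eq_div_iff (by positivity) h1a.ne']; ring

lemma aux_gnonneg (a c d : ℝ) (ha : 0 < a) (ha1 : a < 1) (hc1 : c ≤ 1) (hd1 : d ≤ 1) :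
    0 ≤ 2 * a * (c - d) ^ 2 / (((1 - c) + (1 - d)) ^ 2 - a ^ 2 * (c - d) ^ 2) := by
  apply div_nonneg (by positivity)
  have hA2 : (c - d) ^ 2 ≤ ((1 - c) + (1 - d)) ^ 2 := by
    nlinarith [mul_nonneg (by linarith : (0:ℝ) ≤ 1 - c) (by linarith : (0:ℝ) ≤ 1 - d)]
  have ha2 : a ^ 2 ≤ 1 := by nlinarith
  nlinarith [mul_le_mul_of_nonneg_right ha2 (sq_nonneg (c - d))]

lemma aux_gbound (a c d : ℝ) (ha : 0 < a) (ha1 : a < 1) (hc1 : c ≤ 1) (hd1 : d ≤ 1) :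
    2 * a * (c - d) ^ 2 / (((1 - c) + (1 - d)) ^ 2 - a ^ 2 * (c - d) ^ 2)
      ≤ 2 * a / (1 - a ^ 2) := by
  have h1a : 0 < 1 - a ^ 2 := by nlinarith
  rcases eq_or_lt_of_le (by linarith : (0:ℝ) ≤ (1 - c) + (1 - d)) with hB | hB
  · have hc : c = 1 := by linarith
    have hd : d = 1 := by linarith
    subst hc; subst hd
    simp
    positivity
  · have hA2 : (c - d) ^ 2 ≤ ((1 - c) + (1 - d)) ^ 2 := by nlinarith
    calc 2 * a * (c - d) ^ 2 / (((1 - c) + (1 - d)) ^ 2 - a ^ 2 * (c - d) ^ 2)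
        ≤ 2 * a * ((1 - c) + (1 - d)) ^ 2 / ((1 - a ^ 2) * ((1 - c) + (1 - d)) ^ 2) := by
          apply div_le_div₀ (by positivity) (by nlinarith) (by positivity)
          nlinarith
      _ = 2 * a / (1 - a ^ 2) := by
          rw [div_eq_div_iff (by positivity) h1a.ne']; ring

set_option maxHeartbeats 1000000 in
theorem stmt12 (a : ℝ) (ha : 0 < a) (ha1 : a < 1) :
    0 < ∫ u in Set.Icc (0 : ℝ) (2 * π), ∫ v in Set.Icc (0 : ℝ) (2 * π),
      (Real.cos u - Real.cos v) /
        ((1 - Real.cos u) + (1 - Real.cos v) + a * (Real.cos v - Real.cos u)) := by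
  have hπ := Real.pi_pos
  set K : Set ℝ := Set.Icc (0 : ℝ) (2 * π) with hK
  set μ : Measure ℝ := volume.restrict K with hμ
  set F : ℝ × ℝ → ℝ := fun p => (cos p.1 - cos p.2) /
      ((1 - cos p.1) + (1 - cos p.2) + a * (cos p.2 - cos p.1)) with hFdef
  set G : ℝ × ℝ → ℝ := fun p => 2 * a * (cos p.1 - cos p.2) ^ 2 /
      (((1 - cos p.1) + (1 - cos p.2)) ^ 2 - a ^ 2 * (cos p.1 - cos p.2) ^ 2) with hGdef
  have hfin : IsFiniteMeasure (μ.prod μ) := by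
    constructor
    rw [← Set.univ_prod_univ, Measure.prod_prod]
    rw [hμ, Measure.restrict_apply_univ, hK, Real.volume_Icc]
    exact ENNReal.mul_lt_top ENNReal.ofReal_lt_top ENNReal.ofReal_lt_top
  -- integrability helper
  have hint : ∀ (H : ℝ × ℝ → ℝ) (C : ℝ), Measurable H → (∀ p, |H p| ≤ C) →
      Integrable H (μ.prod μ) := by
    intro H C hm hb
    apply Integrable.mono' (g := fun _ => C) (integrable_const C)
      hm.aestronglyMeasurable
    filter_upwards with p using hb p
  have hmF : Measurable F := by
    apply Measurable.div <;> fun_prop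
  have hmFs : Measurable (fun p : ℝ × ℝ => F p.swap) := hmF.comp measurable_swap
  have hmG : Measurable G := by
    apply Measurable.div <;> fun_prop
  have hIF : Integrable F (μ.prod μ) :=
    hint F (1 / (1 - a)) hmF fun p =>
      aux_fbound a _ _ ha ha1 (Real.cos_le_one _) (Real.cos_le_one _)
  have hIFs : Integrable (fun p : ℝ × ℝ => F p.swap) (μ.prod μ) :=
    hint _ (1 / (1 - a)) hmFs fun p =>
      aux_fbound a _ _ ha ha1 (Real.cos_le_one _) (Real.cos_le_one _)
  have hIG : Integrable G (μ.prod μ) :=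
    hint G (2 * a / (1 - a ^ 2)) hmG fun p => by
      rw [abs_of_nonneg (aux_gnonneg a _ _ ha ha1 (Real.cos_le_one _) (Real.cos_le_one _))]
      exact aux_gbound a _ _ ha ha1 (Real.cos_le_one _) (Real.cos_le_one _)
  have hswap : ∫ z, F z.swap ∂μ.prod μ = ∫ z, F z ∂μ.prod μ :=
    integral_prod_swap F
  have hsum : ∀ z : ℝ × ℝ, F z + F z.swap = G z := fun z =>
    aux_key a _ _ ha ha1 (Real.cos_le_one _) (Real.cos_le_one _)
  have h2I : (∫ z, F z ∂μ.prod μ) + ∫ z, (fun p : ℝ × ℝ => F p.swap) z ∂μ.prod μ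
      = ∫ z, G z ∂μ.prod μ := by
    rw [← integral_add hIF hIFs]
    exact integral_congr_ae (Filter.Eventually.of_forall hsum)
  -- positivity of ∫ G
  have hS : Set.Icc (π/2) (2*π/3) ×ˢ Set.Icc (π/6) (π/3) ⊆ K ×ˢ K := by
    apply Set.prod_mono <;> apply Set.Icc_subset_Icc <;> nlinarith
  set S : Set (ℝ × ℝ) := Set.Icc (π/2) (2*π/3) ×ˢ Set.Icc (π/6) (π/3) with hSdef
  have hGlow : ∀ p ∈ S, a / 32 ≤ G p := by
    rintro ⟨u, v⟩ ⟨hu, hv⟩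
    simp only [Set.mem_Icc] at hu hv
    have hcu : cos u ≤ 0 :=
      Real.cos_nonpos_of_pi_div_two_le_of_le hu.1 (by nlinarith [hu.2])
    have hcu1 : -1 ≤ cos u := Real.neg_one_le_cos u
    have hcv : (1:ℝ)/2 ≤ cos v := by
      rw [← Real.cos_pi_div_three]
      apply Real.cos_le_cos_of_nonneg_of_le_pi (by nlinarith [hv.1]) (by nlinarith) hv.2
    have hcv1 : cos v ≤ 1 := Real.cos_le_one v
    have hA : cos u - cos v ≤ -(1/2) := by linarith
    have hA2 : (1:ℝ)/4 ≤ (cos u - cos v) ^ 2 := by nlinarith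
    have hB : (1:ℝ) ≤ (1 - cos u) + (1 - cos v) := by linarith
    have hBu : (1 - cos u) + (1 - cos v) ≤ 4 := by linarith
    have hAB : (cos u - cos v)^2 ≤ ((1 - cos u) + (1 - cos v))^2 := by nlinarith
    have hden : 0 < ((1 - cos u) + (1 - cos v)) ^ 2 - a ^ 2 * (cos u - cos v) ^ 2 := by
      have ha2 : a ^ 2 < 1 := by nlinarith
      have h1 : a ^ 2 * (cos u - cos v) ^ 2 ≤ a ^ 2 * ((1 - cos u) + (1 - cos v)) ^ 2 :=
        mul_le_mul_of_nonneg_left hAB (sq_nonneg a)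
      have h2 : a ^ 2 * ((1 - cos u) + (1 - cos v)) ^ 2 < ((1 - cos u) + (1 - cos v)) ^ 2 := by
        nlinarith
      linarith
    have hden16 : ((1 - cos u) + (1 - cos v)) ^ 2 - a ^ 2 * (cos u - cos v) ^ 2 ≤ 16 := by
      nlinarith
    show a / 32 ≤ 2 * a * (cos u - cos v) ^ 2 /
        (((1 - cos u) + (1 - cos v)) ^ 2 - a ^ 2 * (cos u - cos v) ^ 2)
    calc a / 32 = (a / 2) / 16 := by ring
      _ ≤ 2 * a * (cos u - cos v) ^ 2 /
        (((1 - cos u) + (1 - cos v)) ^ 2 - a ^ 2 * (cos u - cos v) ^ 2) := by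
          apply div_le_div₀ (by positivity) (by nlinarith) hden hden16
  have hGpos : 0 < ∫ z, G z ∂μ.prod μ := by
    have hprodμ : μ.prod μ = (volume : Measure (ℝ × ℝ)).restrict (K ×ˢ K) := by
      rw [hμ, Measure.prod_restrict, ← Measure.volume_eq_prod]
    rw [hprodμ]
    have hGnn : ∀ p : ℝ × ℝ, 0 ≤ G p := fun p =>
      aux_gnonneg a _ _ ha ha1 (Real.cos_le_one _) (Real.cos_le_one _)
    have hIG' : IntegrableOn G (K ×ˢ K) := by
      have := hIG; rw [hprodμ] at this; exact this
    have hvolS : (volume S).toReal = (π/6) * (π/6) := by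
      rw [hSdef, Measure.volume_eq_prod, Measure.prod_prod, Real.volume_Icc, Real.volume_Icc,
        ← ENNReal.ofReal_mul (by nlinarith)]
      rw [ENNReal.toReal_ofReal (by nlinarith)]
      ring
    have hvolSne : volume S ≠ ⊤ := by
      rw [hSdef, Measure.volume_eq_prod, Measure.prod_prod, Real.volume_Icc, Real.volume_Icc]
      exact (ENNReal.mul_lt_top ENNReal.ofReal_lt_top ENNReal.ofReal_lt_top).ne
    have h1 : a / 32 * (volume S).toReal ≤ ∫ z in S, G z := by
      refine le_trans (le_of_eq ?_) (setIntegral_ge_of_const_le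
        (measurableSet_Icc.prod measurableSet_Icc) hvolSne hGlow (hIG'.mono_set hS))
      rw [smul_eq_mul, measureReal_def]
      exact mul_comm _ _
    have h2 : ∫ z in S, G z ≤ ∫ z in K ×ˢ K, G z := by
      apply setIntegral_mono_set hIG' (Filter.Eventually.of_forall hGnn)
      exact hS.eventuallyLE
    have h3 : 0 < a / 32 * (volume S).toReal := by
      rw [hvolS]; positivity
    linarith
  have hIpos : 0 < ∫ z, F z ∂μ.prod μ := by
    rw [hswap] at h2I; linarith
  have := integral_prod F hIF
  rw [this] at hIpos
  exact hIpos
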